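/- Let k ≥ 1 be an integer, let V ≥ 0 be a real number, and let e_0, e_1, …, e_k be real numbers with e_0 ≥ 0 and e_i ≥ e_{i−1} + (1/k)·((1 − 1/k)^{i−1}·V − e_{i−1}) for every 1 ≤ i ≤ k. Then e_i ≥ (i/k)·(1 − 1/k)^{i−1}·V for every 0 ≤ i ≤ k. -/

import Mathlib

/-- The recurrence `e_i ≥ e_{i-1} + (1/k)·((1 − 1/k)^{i-1}·V − e_{i-1})` with `e_0 ≥ 0`
implies `e_i ≥ (i/k)·(1 − 1/k)^{i-1}·V` for all `0 ≤ i ≤ k`. -/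
theorem recurrence_bound (k : ℕ) (hk : 1 ≤ k) (V : ℝ) (hV : 0 ≤ V)
    (e : ℕ → ℝ) (h0 : 0 ≤ e 0)
    (hrec : ∀ i : ℕ, 1 ≤ i → i ≤ k →
      e i ≥ e (i - 1) + (1 / (k : ℝ)) * ((1 - 1 / (k : ℝ)) ^ (i - 1) * V - e (i - 1))) :
    ∀ i : ℕ, i ≤ k → e i ≥ ((i : ℝ) / (k : ℝ)) * (1 - 1 / (k : ℝ)) ^ (i - 1) * V := by
  have hk' : (1 : ℝ) ≤ (k : ℝ) := by exact_mod_cast hk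
  have hkpos : (0 : ℝ) < (k : ℝ) := by linarith
  have hc0 : (0 : ℝ) ≤ 1 - 1 / (k : ℝ) := by
    have : 1 / (k : ℝ) ≤ 1 := by
      rw [div_le_one hkpos]; exact hk'
    linarith
  intro i
  induction i with
  | zero => intro _; simpa using h0
  | succ i ih =>
    intro h
    have hi : i ≤ k := by omega
    have ihi := ih hi
    have hrec' := hrec (i + 1) (by omega) h
    simp only [Nat.add_sub_cancel] at hrec' ⊢
    have hpow : (0 : ℝ) ≤ (1 - 1 / (k : ℝ)) ^ i := pow_nonneg hc0 i
    match i, ihi with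
    | 0, ihi =>
      simp only [pow_zero] at hrec' ⊢
      push_cast
      nlinarith
    | (j+1), ihi =>
      simp only [Nat.add_sub_cancel] at ihi
      have hpowj : (0 : ℝ) ≤ (1 - 1 / (k : ℝ)) ^ j := pow_nonneg hc0 j
      have hstep : (1 - 1 / (k : ℝ)) ^ (j + 1) = (1 - 1 / (k : ℝ)) * (1 - 1 / (k : ℝ)) ^ j := by
        ring
      have hstep2 : (1 - 1 / (k : ℝ)) ^ (j + 2) = (1 - 1 / (k : ℝ)) * (1 - 1 / (k : ℝ)) ^ (j + 1) := by
        ring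
      push_cast
      push_cast at ihi
      have key : (1 - 1 / (k : ℝ)) * ((↑j + 1) / ↑k * (1 - 1 / ↑k) ^ j * V) ≤
          (1 - 1 / (k : ℝ)) * e (j + 1) := mul_le_mul_of_nonneg_left ihi hc0
      have hkne : (k : ℝ) ≠ 0 := ne_of_gt hkpos
      have final : ((j:ℝ) + 1 + 1) / ↑k * (1 - 1 / ↑k) ^ (j + 1) * V =
          (1 - 1 / (k : ℝ)) * ((↑j + 1) / ↑k * (1 - 1 / ↑k) ^ j * V) +
          1 / ↑k * ((1 - 1 / ↑k) ^ (j + 1) * V) := by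
        rw [hstep]
        ring
      rw [ge_iff_le, final]
      linarith [key, hrec']
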